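/- For any real v and any b > 0, e^{b²}·Φ(v+b) − Φ(v) > e^{b²/2 − b·v}·(Φ(v) − Φ(v−b)). -/

import Mathlib

open MeasureTheory ProbabilityTheory Real Set Filter

noncomputable def Φ (x : ℝ) : ℝ := ∫ t in Set.Iic x, Real.exp (-t^2/2) / Real.sqrt (2*Real.pi)

lemma gauss_integrable : Integrable (fun t : ℝ => Real.exp (-t^2/2) / Real.sqrt (2*Real.pi)) := by
  have h : (fun t : ℝ => Real.exp (-t^2/2) / Real.sqrt (2*Real.pi))
      = fun t : ℝ => Real.exp (-(1/2 : ℝ)*t^2) / Real.sqrt (2*Real.pi) := by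
    funext t; ring_nf
  rw [h]
  exact (integrable_exp_neg_mul_sq (by norm_num : (0:ℝ) < 1/2)).div_const _

lemma gauss_cont : Continuous (fun t : ℝ => Real.exp (-t^2/2) / Real.sqrt (2*Real.pi)) := by
  exact (Real.continuous_exp.comp (by continuity)).div_const _

lemma gauss_pos (t : ℝ) : 0 < Real.exp (-t^2/2) / Real.sqrt (2*Real.pi) := by
  apply div_pos (Real.exp_pos _)
  exact Real.sqrt_pos.mpr (by positivity)

lemma Φ_hasDeriv (x : ℝ) : HasDerivAt Φ (Real.exp (-x^2/2) / Real.sqrt (2*Real.pi)) x := by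
  have key : Φ = fun y => (∫ t in Set.Iic (0:ℝ), Real.exp (-t^2/2) / Real.sqrt (2*Real.pi))
      + ∫ t in (0:ℝ)..y, Real.exp (-t^2/2) / Real.sqrt (2*Real.pi) := by
    funext y
    have := intervalIntegral.integral_Iic_sub_Iic (μ := volume)
      (f := fun t : ℝ => Real.exp (-t^2/2) / Real.sqrt (2*Real.pi))
      gauss_integrable.integrableOn gauss_integrable.integrableOn (a := 0) (b := y)
    simp only [Φ]
    linarith
  rw [key]
  have h := intervalIntegral.integral_hasDerivAt_right (a := (0:ℝ)) (b := x)
    (f := fun t : ℝ => Real.exp (-t^2/2) / Real.sqrt (2*Real.pi))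
    gauss_integrable.intervalIntegrable
    gauss_cont.stronglyMeasurable.stronglyMeasurableAtFilter
    gauss_cont.continuousAt
  exact h.const_add _

lemma Φ_strictMono : StrictMono Φ := by
  apply strictMono_of_deriv_pos
  intro x
  rw [(Φ_hasDeriv x).deriv]
  exact gauss_pos x

lemma Φ_nonneg (x : ℝ) : 0 ≤ Φ x := by
  apply setIntegral_nonneg measurableSet_Iic
  intro t _; exact (gauss_pos t).le

lemma Φ_tail_bound {b v : ℝ} (_hb : 0 < b) (hv1 : v ≤ -1) (hv2 : v ≤ -4*b) :
    Φ v ≤ Real.exp (2*b*v) / Real.sqrt (2*Real.pi) := by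
  have hle : Φ v ≤ ∫ t in Set.Iic v, Real.exp (2*b*v - v) * Real.exp t / Real.sqrt (2*Real.pi) := by
    apply setIntegral_mono_on gauss_integrable.integrableOn
    · exact (((integrableOn_exp_Iic v).const_mul _).div_const _)
    · exact measurableSet_Iic
    · intro t ht
      simp only [Set.mem_Iic] at ht
      rw [← Real.exp_add]
      gcongr
      nlinarith [sq_nonneg (t + 1), mul_nonneg (sub_nonneg.mpr ht) (by linarith : (0:ℝ) ≤ -v - 1)]
  calc Φ v ≤ _ := hle
    _ = Real.exp (2*b*v) / Real.sqrt (2*Real.pi) := by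
        simp only [mul_div_assoc]
        rw [MeasureTheory.integral_const_mul]
        simp only [div_eq_mul_inv]
        rw [MeasureTheory.integral_mul_const, integral_exp_Iic, ← mul_assoc, ← Real.exp_add]
        ring_nf

lemma tail_tendsto {b : ℝ} (hb : 0 < b) :
    Tendsto (fun v => Real.exp (-(b*v)) * Φ v) atBot (nhds 0) := by
  have hup : Tendsto (fun v => Real.exp (b*v) / Real.sqrt (2*Real.pi)) atBot (nhds 0) := by
    have : Tendsto (fun v : ℝ => b*v) atBot atBot := tendsto_id.const_mul_atBot hb
    simpa using (Real.tendsto_exp_atBot.comp this).div_const (Real.sqrt (2*Real.pi))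
  apply tendsto_of_tendsto_of_tendsto_of_le_of_le' tendsto_const_nhds hup
  · filter_upwards with v
    exact mul_nonneg (Real.exp_pos _).le (Φ_nonneg v)
  · filter_upwards [eventually_le_atBot (-1 : ℝ), eventually_le_atBot (-4*b)] with v hv1 hv2
    have h := Φ_tail_bound hb hv1 hv2
    calc Real.exp (-(b*v)) * Φ v ≤ Real.exp (-(b*v)) * (Real.exp (2*b*v) / Real.sqrt (2*Real.pi)) := by
          gcongr
      _ = Real.exp (b*v) / Real.sqrt (2*Real.pi) := by
          rw [mul_div_assoc', ← Real.exp_add]; ring_nf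

theorem stmt2 (v b : ℝ) (hb : 0 < b) :
    Real.exp (b^2/2 - b*v) * (Φ v - Φ (v-b)) < Real.exp (b^2) * Φ (v+b) - Φ v := by
  set F : ℝ → ℝ := fun w => Real.exp (b^2) * Φ (w+b) + Real.exp (b^2/2 - b*w) * Φ (w-b)
    - (1 + Real.exp (b^2/2 - b*w)) * Φ w with hF
  -- derivative of F
  have hderiv : ∀ w : ℝ, HasDerivAt F
      (b * Real.exp (b^2/2 - b*w) * (Φ w - Φ (w-b))) w := by
    intro w
    have h1 : HasDerivAt (fun w : ℝ => Φ (w+b)) (Real.exp (-(w+b)^2/2) / Real.sqrt (2*Real.pi)) w := by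
      simpa [Function.comp_def] using (Φ_hasDeriv (w+b)).comp w ((hasDerivAt_id w).add_const b)
    have h2 : HasDerivAt (fun w : ℝ => Φ (w-b)) (Real.exp (-(w-b)^2/2) / Real.sqrt (2*Real.pi)) w := by
      simpa [Function.comp_def] using (Φ_hasDeriv (w-b)).comp w ((hasDerivAt_id w).sub_const b)
    have h3 : HasDerivAt (fun w : ℝ => Real.exp (b^2/2 - b*w))
        (Real.exp (b^2/2 - b*w) * (-b)) w := by
      have hin : HasDerivAt (fun w : ℝ => b^2/2 - b*w) (-b) w := by
        simpa using ((hasDerivAt_id w).const_mul b).const_sub (b^2/2)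
      exact (Real.hasDerivAt_exp _).comp w hin
    have h4 : HasDerivAt Φ (Real.exp (-w^2/2) / Real.sqrt (2*Real.pi)) w := Φ_hasDeriv w
    have hsum := ((h1.const_mul (Real.exp (b^2))).add (h3.mul h2)).sub
      ((h3.const_add 1).mul h4)
    convert hsum using 1
    · rfl
    · rfl
    · rfl
    have e1 : Real.exp (b^2) * (Real.exp (-(w+b)^2/2) / Real.sqrt (2*Real.pi))
        = Real.exp (b^2/2 - b*w) * (Real.exp (-w^2/2) / Real.sqrt (2*Real.pi)) := by
      rw [mul_div_assoc', mul_div_assoc', ← Real.exp_add, ← Real.exp_add]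
      ring_nf
    have e2 : Real.exp (b^2/2 - b*w) * (Real.exp (-(w-b)^2/2) / Real.sqrt (2*Real.pi))
        = Real.exp (-w^2/2) / Real.sqrt (2*Real.pi) := by
      rw [mul_div_assoc', ← Real.exp_add]
      ring_nf
    ring_nf
    ring_nf at e1 e2
    linarith
  have hmono : StrictMono F := by
    apply strictMono_of_deriv_pos
    intro w
    rw [(hderiv w).deriv]
    have hΦ : Φ (w-b) < Φ w := Φ_strictMono (by linarith)
    exact mul_pos (mul_pos hb (Real.exp_pos _)) (sub_pos.mpr hΦ)
  -- limit of F at -infinity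
  have hF0 : Tendsto F atBot (nhds 0) := by
    have hG := tail_tendsto hb
    have hebv : Tendsto (fun w : ℝ => Real.exp (b*w)) atBot (nhds 0) := by
      exact Real.tendsto_exp_atBot.comp (tendsto_id.const_mul_atBot hb)
    have hΦ0 : Tendsto Φ atBot (nhds 0) := by
      have := hebv.mul hG
      simp only [zero_mul] at this
      apply this.congr
      intro w
      rw [← mul_assoc, ← Real.exp_add]
      simp
    have t1 : Tendsto (fun w : ℝ => Real.exp (b^2) * Φ (w+b)) atBot (nhds 0) := by
      have : Tendsto (fun w : ℝ => w + b) atBot atBot := tendsto_atBot_add_const_right _ b tendsto_id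
      simpa using (tendsto_const_nhds (x := Real.exp (b^2))).mul (hΦ0.comp this)
    have t2 : Tendsto (fun w : ℝ => Real.exp (b^2/2 - b*w) * Φ (w-b)) atBot (nhds 0) := by
      have hshift : Tendsto (fun w : ℝ => w - b) atBot atBot := tendsto_atBot_add_const_right _ (-b) tendsto_id
      have := (tendsto_const_nhds (x := Real.exp (b^2/2 - b*b))).mul (hG.comp hshift)
      simp only [mul_zero] at this
      apply this.congr
      intro w
      simp only [Function.comp_apply]
      rw [← mul_assoc, ← Real.exp_add]
      ring_nf
    have t3 : Tendsto (fun w : ℝ => (1 + Real.exp (b^2/2 - b*w)) * Φ w) atBot (nhds 0) := by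
      have ta : Tendsto (fun w : ℝ => Real.exp (b^2/2 - b*w) * Φ w) atBot (nhds 0) := by
        have := (tendsto_const_nhds (x := Real.exp (b^2/2))).mul hG
        simp only [mul_zero] at this
        apply this.congr
        intro w
        rw [← mul_assoc, ← Real.exp_add]
        ring_nf
      have := hΦ0.add ta
      simp only [add_zero] at this
      apply this.congr
      intro w; ring
    have := (t1.add t2).sub t3
    simpa using this
  -- conclude
  have hge : 0 ≤ F (v - 1) := by
    apply le_of_tendsto hF0
    filter_upwards [eventually_le_atBot (v - 1)] with w hw
    exact hmono.monotone hw
  have hlt : F (v - 1) < F v := hmono (by linarith)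
  have hFv : 0 < F v := lt_of_le_of_lt hge hlt
  rw [hF] at hFv
  simp only at hFv
  nlinarith [hFv]
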